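/- If a graph G admits a straight-line drawing in ℝ² covered by k lines, then the number of edges of G incident to vertices of degree at least 3 is at most 2k(k-1) (at most 2(k-1) such edges lie on each line). -/
import Mathlib


/-- `L` is a line in `ℝ^d`. -/
def IsLine {d : ℕ} (L : Set (Fin d → ℝ)) : Prop :=
  ∃ p v : Fin d → ℝ, v ≠ 0 ∧ L = {x | ∃ t : ℝ, x = p + t • v}


lemma mem_segment_param {d : ℕ} (p v : Fin d → ℝ) {a b c : ℝ} (h : c ∈ Set.uIcc a b) :
    p + c • v ∈ segment ℝ (p + a • v) (p + b • v) := by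
  let f : ℝ →ᵃ[ℝ] (Fin d → ℝ) := AffineMap.lineMap (0 : Fin d → ℝ) v + AffineMap.const ℝ ℝ p
  have hf : ∀ t : ℝ, f t = p + t • v := by
    intro t
    simp [f, AffineMap.lineMap_apply_module]
    abel
  have h2 : f c ∈ f '' segment ℝ a b := ⟨c, by rwa [← segment_eq_uIcc] at h, rfl⟩
  rw [image_segment] at h2
  rwa [hf, hf, hf] at h2

lemma isLine_eq {d : ℕ} {L : Set (Fin d → ℝ)} (hL : IsLine L) {x y : Fin d → ℝ}
    (hx : x ∈ L) (hy : y ∈ L) (hxy : x ≠ y) :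
    L = {z | ∃ t : ℝ, z = x + t • (y - x)} := by
  obtain ⟨p, v, hv, rfl⟩ := hL
  obtain ⟨s, rfl⟩ := hx
  obtain ⟨r, rfl⟩ := hy
  have hrs : r - s ≠ 0 := by
    intro h0
    exact hxy (by rw [sub_eq_zero.mp h0])
  have hsub : (p + r • v) - (p + s • v) = (r - s) • v := by module
  ext z
  simp only [Set.mem_setOf_eq]
  constructor
  · rintro ⟨t, rfl⟩
    refine ⟨(t - s) / (r - s), ?_⟩
    rw [hsub, smul_smul, div_mul_cancel₀ _ hrs]
    module
  · rintro ⟨t, rfl⟩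
    refine ⟨s + t * (r - s), ?_⟩
    rw [hsub, smul_smul]
    module

lemma line_inter {d : ℕ} {L₁ L₂ : Set (Fin d → ℝ)} (h1 : IsLine L₁) (h2 : IsLine L₂)
    (hne : L₁ ≠ L₂) {x y : Fin d → ℝ} (hx1 : x ∈ L₁) (hx2 : x ∈ L₂) (hy1 : y ∈ L₁)
    (hy2 : y ∈ L₂) : x = y := by
  by_contra hxy
  exact hne ((isLine_eq h1 hx1 hy1 hxy).trans (isLine_eq h2 hx2 hy2 hxy).symm)

lemma exists_mid {tu ta tb : ℝ} (ha : ta ≠ tu) (hb : tb ≠ tu) (hs : tu < ta ↔ tu < tb) :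
    ∃ c, c ≠ tu ∧ c ∈ Set.uIcc tu ta ∧ c ∈ Set.uIcc tu tb := by
  rcases lt_or_gt_of_ne ha.symm with h | h
  · have hb' : tu < tb := hs.mp h
    refine ⟨(tu + min ta tb) / 2, ?_, ?_, ?_⟩
    · have := lt_min h hb'; intro he; rw [← he] at this; linarith
    · rw [Set.mem_uIcc]; left
      constructor <;> [skip; skip] <;>
        · have h1 := lt_min h hb'
          have h2 := min_le_left ta tb
          linarith
    · rw [Set.mem_uIcc]; left
      constructor <;>
        · have h1 := lt_min h hb'
          have h2 := min_le_right ta tb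
          linarith
  · have hb' : tb < tu := by
      rcases lt_or_gt_of_ne hb with h' | h'
      · exact h'
      · exact absurd (hs.mpr h') (not_lt.mpr h.le)
    refine ⟨(tu + max ta tb) / 2, ?_, ?_, ?_⟩
    · have := max_lt h hb'; intro he; rw [← he] at this; linarith
    · rw [Set.mem_uIcc]; right
      constructor <;>
        · have h1 := max_lt h hb'
          have h2 := le_max_left ta tb
          linarith
    · rw [Set.mem_uIcc]; right
      constructor <;>
        · have h1 := max_lt h hb'
          have h2 := le_max_right ta tb
          linarith

/-- A `k`-line cover of a graph `G` in `ℝ^d`: a crossing-free straight-line drawing of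
`G` together with `k` lines whose union contains the drawing (all vertices and edges). -/
structure LineCover {V : Type*} (G : SimpleGraph V) (d k : ℕ) where
  pos : V → (Fin d → ℝ)
  inj : Function.Injective pos
  lines : Fin k → Set (Fin d → ℝ)
  isLine : ∀ i, IsLine (lines i)
  coversV : ∀ v, ∃ i, pos v ∈ lines i
  coversE : ∀ ⦃u v⦄, G.Adj u v → ∃ i, segment ℝ (pos u) (pos v) ⊆ lines i
  noCross : ∀ ⦃u v a b⦄, G.Adj u v → G.Adj a b → ({u, v} : Set V) ≠ {a, b} →
    ∀ x ∈ segment ℝ (pos u) (pos v) ∩ segment ℝ (pos a) (pos b),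
      ∃ w, (w = u ∨ w = v) ∧ (w = a ∨ w = b) ∧ x = pos w

/-- The line cover number `ρ¹_d(G)`: the minimum number of lines in `ℝ^d` whose union
contains a crossing-free straight-line drawing of `G`. -/
noncomputable def rho1 {V : Type*} (G : SimpleGraph V) (d : ℕ) : ℕ :=
  sInf {k | Nonempty (LineCover G d k)}

/-- If `G` admits a straight-line drawing in `ℝ²` covered by `k` lines, then the number
of edges of `G` incident to vertices of degree at least 3 is at most `2k(k-1)`. -/
theorem stmt_4 {V : Type*} (G : SimpleGraph V) (k : ℕ)
    (h : Nonempty (LineCover G 2 k)) :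
    {e ∈ G.edgeSet | ∃ v ∈ e, 3 ≤ (G.neighborSet v).ncard}.ncard ≤ 2 * k * (k - 1) := by
  classical
  obtain ⟨C⟩ := h
  set S : Set (Sym2 V) := {e ∈ G.edgeSet | ∃ v ∈ e, 3 ≤ (G.neighborSet v).ncard} with hS
  rcases Nat.eq_zero_or_pos k with rfl | hk
  · have hempty : S = ∅ := by
      ext e
      simp only [Set.mem_empty_iff_false, iff_false]
      intro he
      obtain ⟨-, v, -, -⟩ := he
      obtain ⟨i, -⟩ := C.coversV v
      exact i.elim0
    rw [hempty]
    simp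
  choose P Vv hVv hL using C.isLine
  -- parameters along a line are unique
  have pinj : ∀ (i : Fin k) (s t : ℝ), P i + s • Vv i = P i + t • Vv i → s = t := by
    intro i s t hst
    have h1 : (s - t) • Vv i = 0 := by
      have h2 : s • Vv i = t • Vv i := add_left_cancel hst
      rw [sub_smul, h2, sub_self]
    rcases smul_eq_zero.mp h1 with h' | h'
    · linarith [sub_eq_zero.mp h']
    · exact absurd h' (hVv i)
  -- two edges at a vertex on the same line on the same side are equal
  have key : ∀ (u a b : V) (i : Fin k) (tu ta tb : ℝ), G.Adj u a → G.Adj u b →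
      C.pos u = P i + tu • Vv i → C.pos a = P i + ta • Vv i → C.pos b = P i + tb • Vv i →
      (tu < ta ↔ tu < tb) → a = b := by
    intro u a b i tu ta tb hua hub hpu hpa hpb hsign
    by_contra hab
    have hta : ta ≠ tu := by
      intro h'
      exact hua.ne' (C.inj (by rw [hpa, hpu, h']))
    have htb : tb ≠ tu := by
      intro h'
      exact hub.ne' (C.inj (by rw [hpb, hpu, h']))
    obtain ⟨c, hc, hca, hcb⟩ := exists_mid hta htb hsign
    have hxa : P i + c • Vv i ∈ segment ℝ (C.pos u) (C.pos a) := by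
      rw [hpu, hpa]; exact mem_segment_param _ _ hca
    have hxb : P i + c • Vv i ∈ segment ℝ (C.pos u) (C.pos b) := by
      rw [hpu, hpb]; exact mem_segment_param _ _ hcb
    have hsets : ({u, a} : Set V) ≠ {u, b} := by
      intro hset
      have hbmem : b ∈ ({u, a} : Set V) := by
        rw [hset]; simp
      rcases hbmem with h' | h'
      · exact hub.ne' h'
      · exact hab h'.symm
    obtain ⟨w, hw1, hw2, hwx⟩ := C.noCross hua hub hsets _ ⟨hxa, hxb⟩
    rcases hw1 with rfl | rfl
    · exact hc (pinj i c tu (hwx.trans hpu))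
    · rcases hw2 with h' | h'
      · exact hua.ne' h'
      · exact hab h'
  -- a degree ≥ 3 vertex lies on two distinct lines
  have twoLines : ∀ (u : V) (i : Fin k), 3 ≤ (G.neighborSet u).ncard →
      C.pos u ∈ C.lines i → ∃ j, C.lines j ≠ C.lines i ∧ C.pos u ∈ C.lines j := by
    intro u i hdeg hui
    have hfin : (G.neighborSet u).Finite := by
      by_contra hf
      rw [Set.Infinite.ncard hf] at hdeg
      omega
    obtain ⟨a, ha, b, hb, c, hc, hab, hac, hbc⟩ :=
      (Set.two_lt_ncard hfin).mp (by omega)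
    have hadja : G.Adj u a := ha
    have hadjb : G.Adj u b := hb
    have hadjc : G.Adj u c := hc
    obtain ⟨ia, hia⟩ := C.coversE hadja
    obtain ⟨ib, hib⟩ := C.coversE hadjb
    obtain ⟨ic, hic⟩ := C.coversE hadjc
    by_cases ha' : C.lines ia ≠ C.lines i
    · exact ⟨ia, ha', hia (left_mem_segment ℝ _ _)⟩
    by_cases hb' : C.lines ib ≠ C.lines i
    · exact ⟨ib, hb', hib (left_mem_segment ℝ _ _)⟩
    by_cases hc' : C.lines ic ≠ C.lines i
    · exact ⟨ic, hc', hic (left_mem_segment ℝ _ _)⟩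
    exfalso
    push_neg at ha' hb' hc'
    have hpa : C.pos a ∈ C.lines i := by rw [← ha']; exact hia (right_mem_segment ℝ _ _)
    have hpb : C.pos b ∈ C.lines i := by rw [← hb']; exact hib (right_mem_segment ℝ _ _)
    have hpc : C.pos c ∈ C.lines i := by rw [← hc']; exact hic (right_mem_segment ℝ _ _)
    rw [hL i] at hui hpa hpb hpc
    obtain ⟨tu, htu⟩ := hui
    obtain ⟨ta, hta⟩ := hpa
    obtain ⟨tb, htb⟩ := hpb
    obtain ⟨tc, htc⟩ := hpc
    have h1 : ¬(tu < ta ↔ tu < tb) := fun hs =>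
      hab (key u a b i tu ta tb hadja hadjb htu hta htb hs)
    have h2 : ¬(tu < ta ↔ tu < tc) := fun hs =>
      hac (key u a c i tu ta tc hadja hadjc htu hta htc hs)
    have h3 : ¬(tu < tb ↔ tu < tc) := fun hs =>
      hbc (key u b c i tu tb tc hadjb hadjc htu htb htc hs)
    tauto
  -- data for each counted edge
  have hdata : ∀ e ∈ S, ∃ q : (Fin k × Fin k) × Bool, ∃ (u w : V) (tu tw : ℝ),
      e = s(u, w) ∧ G.Adj u w ∧
      C.lines q.1.2 ≠ C.lines q.1.1 ∧ C.pos u ∈ C.lines q.1.2 ∧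
      C.pos u = P q.1.1 + tu • Vv q.1.1 ∧ C.pos w = P q.1.1 + tw • Vv q.1.1 ∧
      q.2 = decide (tu < tw) := by
    intro e he
    obtain ⟨hee, v, hv, hdeg⟩ := he
    have hew : s(v, Sym2.Mem.other hv) = e := Sym2.other_spec hv
    have hadj : G.Adj v (Sym2.Mem.other hv) := by
      rw [← SimpleGraph.mem_edgeSet, hew]; exact hee
    obtain ⟨i, hi⟩ := C.coversE hadj
    have hui : C.pos v ∈ C.lines i := hi (left_mem_segment ℝ _ _)
    have hwi : C.pos (Sym2.Mem.other hv) ∈ C.lines i := hi (right_mem_segment ℝ _ _)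
    obtain ⟨j, hj, huj⟩ := twoLines v i hdeg hui
    rw [hL i] at hui hwi
    obtain ⟨tu, htu⟩ := hui
    obtain ⟨tw, htw⟩ := hwi
    refine ⟨((i, j), @decide (tu < tw) (Real.decidableLT tu tw)), v, Sym2.Mem.other hv, tu, tw, hew.symm, hadj, hj, huj,
      htu, htw, rfl⟩
  have hne : Nonempty ((Fin k × Fin k) × Bool) := ⟨((⟨0, hk⟩, ⟨0, hk⟩), true)⟩
  let f : Sym2 V → (Fin k × Fin k) × Bool := fun e =>
    if he : e ∈ S then (hdata e he).choose else hne.some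
  have hf : ∀ e ∈ S, ∃ (u w : V) (tu tw : ℝ),
      e = s(u, w) ∧ G.Adj u w ∧
      C.lines (f e).1.2 ≠ C.lines (f e).1.1 ∧ C.pos u ∈ C.lines (f e).1.2 ∧
      C.pos u = P (f e).1.1 + tu • Vv (f e).1.1 ∧ C.pos w = P (f e).1.1 + tw • Vv (f e).1.1 ∧
      (f e).2 = decide (tu < tw) := by
    intro e he
    simp only [f, dif_pos he]
    exact (hdata e he).choose_spec
  set T : Finset ((Fin k × Fin k) × Bool) :=
    Finset.univ.offDiag ×ˢ (Finset.univ : Finset Bool) with hT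
  have hmaps : ∀ e ∈ S, f e ∈ (↑T : Set ((Fin k × Fin k) × Bool)) := by
    intro e he
    obtain ⟨u, w, tu, tw, -, -, hj, -, -, -, -⟩ := hf e he
    simp only [T, Finset.coe_product, Set.mem_prod, Finset.mem_coe, Finset.mem_offDiag,
      Finset.mem_univ, true_and, Finset.coe_univ, Set.mem_univ, and_true]
    intro hEq
    exact hj (by rw [hEq])
  have hinj : Set.InjOn f S := by
    intro e1 he1 e2 he2 hfe
    obtain ⟨u1, w1, tu1, tw1, heq1, hadj1, hj1, huj1, htu1, htw1, hs1⟩ := hf e1 he1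
    obtain ⟨u2, w2, tu2, tw2, heq2, hadj2, hj2, huj2, htu2, htw2, hs2⟩ := hf e2 he2
    rw [hfe] at hj1 huj1 htu1 htw1 hs1
    have hui1 : C.pos u1 ∈ C.lines (f e2).1.1 := by rw [hL]; exact ⟨tu1, htu1⟩
    have hui2 : C.pos u2 ∈ C.lines (f e2).1.1 := by rw [hL]; exact ⟨tu2, htu2⟩
    have hpos : C.pos u1 = C.pos u2 :=
      line_inter (C.isLine (f e2).1.2) (C.isLine (f e2).1.1) hj2 huj1 hui1 huj2 hui2
    have hu : u1 = u2 := C.inj hpos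
    subst hu
    have htu : tu1 = tu2 := pinj _ tu1 tu2 (htu1.symm.trans htu2)
    subst htu
    have hsign : (tu1 < tw1 ↔ tu1 < tw2) := by
      have hd : decide (tu1 < tw1) = decide (tu1 < tw2) := hs1.symm.trans hs2
      exact decide_eq_decide.mp hd
    have hw : w1 = w2 := key u1 w1 w2 (f e2).1.1 tu1 tw1 tw2 hadj1 hadj2 htu1 htw1 htw2 hsign
    rw [heq1, heq2, hw]
  calc S.ncard ≤ (↑T : Set ((Fin k × Fin k) × Bool)).ncard :=
        Set.ncard_le_ncard_of_injOn f hmaps hinj (Set.toFinite _)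
    _ = T.card := Set.ncard_coe_finset T
    _ ≤ 2 * k * (k - 1) := by
        rw [hT, Finset.card_product, Finset.offDiag_card]
        simp only [Finset.card_univ, Fintype.card_fin, Fintype.card_bool]
        obtain ⟨n, rfl⟩ := Nat.exists_eq_add_of_lt hk
        have hmm : (0 + n + 1) * (0 + n + 1) - (0 + n + 1) = (n + 1) * n := by
          rw [Nat.mul_succ, Nat.add_sub_cancel]
          ring_nf
        rw [hmm]
        simp [Nat.add_sub_cancel]
        ring_nf
        omega
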